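/- Let E be a real inner product space, let B : E → E be a continuous linear map that is self-adjoint and positive definite, and let g, s ∈ E be linearly independent. Then there exists a unique pair (α, β) ∈ ℝ² minimizing the function (α, β) ↦ −α‖g‖² + β⟨g, s⟩ + (1/2)(α²⟨g, B g⟩ − 2αβ⟨g, B s⟩ + β²⟨s, B s⟩) over ℝ². -/

import Mathlib

open scoped RealInnerProductSpace

/-- For a self-adjoint positive-definite continuous linear map `B` and linearly
independent `g, s`, the two-dimensional reformulation of the quadratic model has a unique
minimizing pair `(α, β) ∈ ℝ²`. -/
theorem two_dim_quadratic_unique_minimizer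
    {E : Type*} [NormedAddCommGroup E] [InnerProductSpace ℝ E]
    (B : E →L[ℝ] E)
    (hB_sa : ∀ u v : E, ⟪u, B v⟫ = ⟪B u, v⟫)
    (hB_pd : ∀ v : E, v ≠ 0 → 0 < ⟪v, B v⟫)
    (g s : E) (hind : LinearIndependent ℝ ![g, s]) :
    ∃! p : ℝ × ℝ, ∀ q : ℝ × ℝ,
      -p.1 * ‖g‖ ^ 2 + p.2 * ⟪g, s⟫ +
          (1 / 2) * (p.1 ^ 2 * ⟪g, B g⟫ - 2 * p.1 * p.2 * ⟪g, B s⟫ + p.2 ^ 2 * ⟪s, B s⟫) ≤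
        -q.1 * ‖g‖ ^ 2 + q.2 * ⟪g, s⟫ +
          (1 / 2) * (q.1 ^ 2 * ⟪g, B g⟫ - 2 * q.1 * q.2 * ⟪g, B s⟫ + q.2 ^ 2 * ⟪s, B s⟫) := by
  rw [LinearIndependent.pair_iff] at hind
  set a : ℝ := ⟪g, B g⟫ with ha
  set b : ℝ := ⟪g, B s⟫ with hb
  set c : ℝ := ⟪s, B s⟫ with hc
  set G : ℝ := ‖g‖ ^ 2 with hG
  set P : ℝ := ⟪g, s⟫ with hP
  have hsg : ⟪s, B g⟫ = b := by
    rw [hb, hB_sa g s, real_inner_comm]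
  -- quadratic form identity
  have hQ : ∀ x y : ℝ, x ^ 2 * a - 2 * x * y * b + y ^ 2 * c
      = ⟪x • g - y • s, B (x • g - y • s)⟫ := by
    intro x y
    simp only [map_sub, map_smul, inner_sub_left, inner_sub_right,
      inner_smul_left, inner_smul_right, RCLike.conj_to_real, ContinuousLinearMap.coe_smul',
      Pi.smul_apply, smul_eq_mul, conj_trivial]
    rw [← ha, ← hb, ← hc, hsg]
    ring
  have hQpos : ∀ x y : ℝ, ¬(x = 0 ∧ y = 0) →
      0 < x ^ 2 * a - 2 * x * y * b + y ^ 2 * c := by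
    intro x y hxy
    rw [hQ]
    apply hB_pd
    intro h0
    obtain ⟨h1, h2⟩ := hind x (-y) (by simpa [sub_eq_add_neg, neg_smul] using h0)
    exact hxy ⟨h1, by simpa using h2⟩
  have hg0 : g ≠ 0 := by
    intro h
    exact one_ne_zero (hind 1 0 (by simp [h])).1
  have hapos : 0 < a := by
    have := hQpos 1 0 (by simp)
    simpa using this
  have hDpos : 0 < a * c - b ^ 2 := by
    have h := hQpos b a (fun h => hapos.ne' h.2)
    nlinarith
  have hD : a * c - b ^ 2 ≠ 0 := ne_of_gt hDpos
  set α : ℝ := (G * c - b * P) / (a * c - b ^ 2) with hα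
  set β : ℝ := (b * G - a * P) / (a * c - b ^ 2) with hβ
  have hstat1 : α * a - β * b = G := by
    rw [hα, hβ, div_mul_eq_mul_div, div_mul_eq_mul_div, ← sub_div, div_eq_iff hD]; ring
  have hstat2 : α * b - β * c = P := by
    rw [hα, hβ, div_mul_eq_mul_div, div_mul_eq_mul_div, ← sub_div, div_eq_iff hD]; ring
  -- key decomposition
  have key : ∀ q : ℝ × ℝ,
      (-q.1 * G + q.2 * P + (1/2) * (q.1 ^ 2 * a - 2 * q.1 * q.2 * b + q.2 ^ 2 * c))
      - (-α * G + β * P + (1/2) * (α ^ 2 * a - 2 * α * β * b + β ^ 2 * c))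
      = (1/2) * ((q.1 - α) ^ 2 * a - 2 * (q.1 - α) * (q.2 - β) * b + (q.2 - β) ^ 2 * c) := by
    intro q
    rw [← hstat1, ← hstat2]
    ring
  refine ⟨(α, β), ?_, ?_⟩
  · intro q
    have hd : 0 ≤ (q.1 - α) ^ 2 * a - 2 * (q.1 - α) * (q.2 - β) * b + (q.2 - β) ^ 2 * c := by
      by_cases h : q.1 - α = 0 ∧ q.2 - β = 0
      · rw [h.1, h.2]; norm_num
      · exact le_of_lt (hQpos _ _ h)
    have := key q
    linarith
  · rintro ⟨x, y⟩ hmin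
    have h1 := hmin (α, β)
    have h2 : ∀ q : ℝ × ℝ,
      -α * G + β * P + (1/2) * (α ^ 2 * a - 2 * α * β * b + β ^ 2 * c) ≤
      -q.1 * G + q.2 * P + (1/2) * (q.1 ^ 2 * a - 2 * q.1 * q.2 * b + q.2 ^ 2 * c) := by
      intro q
      have hd : 0 ≤ (q.1 - α) ^ 2 * a - 2 * (q.1 - α) * (q.2 - β) * b + (q.2 - β) ^ 2 * c := by
        by_cases h : q.1 - α = 0 ∧ q.2 - β = 0
        · rw [h.1, h.2]; norm_num
        · exact le_of_lt (hQpos _ _ h)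
      have := key q
      linarith
    have heq : (-x * G + y * P + (1/2) * (x ^ 2 * a - 2 * x * y * b + y ^ 2 * c))
        = -α * G + β * P + (1/2) * (α ^ 2 * a - 2 * α * β * b + β ^ 2 * c) :=
      le_antisymm (by simpa using h1) (by simpa using h2 (x, y))
    by_contra hne
    have hxy : ¬(x - α = 0 ∧ y - β = 0) := by
      rintro ⟨hx, hy⟩
      exact hne (by
        have : x = α := by linarith
        have : y = β := by linarith
        simp [Prod.ext_iff]; constructor <;> linarith)
    have hpos := hQpos (x - α) (y - β) hxy
    have hk := key (x, y)
    simp only at hk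
    linarith
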